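/- Let n = 2p be even. There exist polynomials P_0, …, P_{p-1} (independent of the spherical variables) such that for all rζ ∈ B_n and ξ ∈ S^{n-1}, P_h(rζ, ξ) = Σ_{k=0}^{p-1} P_k(r) (1-r^2)^k (∂^k/∂r^k) P_e(rζ, ξ), where P_h(rζ,ξ) = ((1-r^2)/(1+r^2-2r⟨ζ,ξ⟩))^{n-1} is the hyperbolic Poisson kernel and P_e(rζ,ξ) = (1-r^2)/(1+r^2-2r⟨ζ,ξ⟩)^{n/2} is the Euclidean Poisson kernel. -/

import Mathlib

noncomputable section

/-- The hyperbolic Poisson kernel as a function of r and t = ⟨ζ,ξ⟩. -/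
def Ph (n : ℕ) (r t : ℝ) : ℝ := ((1 - r ^ 2) / (1 + r ^ 2 - 2 * r * t)) ^ (n - 1)

/-- The Euclidean Poisson kernel as a function of r and t = ⟨ζ,ξ⟩ (n = 2p even). -/
def Pe (p : ℕ) (r t : ℝ) : ℝ := (1 - r ^ 2) / (1 + r ^ 2 - 2 * r * t) ^ p

open Polynomial
open scoped Polynomial.Bivariate

def Sq : ℝ[X][Y] := 1 - Y ^ 2
def Dq : ℝ[X][Y] := 1 + Y ^ 2 - C (2 * X) * Y

def toY (a : ℝ[X]) : ℝ[X][Y] := a.map C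

lemma toY_deriv (a : ℝ[X]) : derivative (toY a) = toY (derivative a) :=
  derivative_map a C

lemma evalEval_toY (a : ℝ[X]) (t r : ℝ) : (toY a).evalEval t r = a.eval r := by
  show eval t (eval (C r) (a.map C)) = a.eval r
  rw [eval_map, eval₂_at_apply, eval_C]

lemma evalEval_map_eval (w : ℝ[X][Y]) (t y : ℝ) :
    w.evalEval t y = (w.map (evalRingHom t)).eval y := by
  show eval t (eval (C y) w) = _
  rw [eval_map]
  simpa using (eval₂_at_apply (p := w) (evalRingHom t) (C y)).symm

lemma hasDerivAt_evalEval (q : ℝ[X][Y]) (t r : ℝ) :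
    HasDerivAt (fun y => q.evalEval t y) ((derivative q).evalEval t r) r := by
  simp only [evalEval_map_eval]
  rw [← derivative_map]
  exact Polynomial.hasDerivAt _ r

def Nq (p : ℕ) : ℕ → ℝ[X][Y]
  | 0 => Sq
  | k + 1 => derivative (Nq p k) * Dq - ((p : ℝ[X][Y]) + (k : ℝ[X][Y])) * Nq p k * derivative Dq

def Aq (p : ℕ) : ℕ → ℕ → ℝ[X]
  | 0, 0 => 1
  | 0, _ + 1 => 0
  | j + 1, k =>
      ((p : ℝ[X]) + (j : ℝ[X])) * (1 + X ^ 2) * Aq p j k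
        - 2 * ((p : ℝ[X]) - 1 - (j : ℝ[X]) + (k : ℝ[X])) * X ^ 2 * Aq p j k
        + X * (1 - X ^ 2) * derivative (Aq p j k)
        + X * (match k with | 0 => 0 | k' + 1 => Aq p j k')

lemma Aq_zero (p : ℕ) : ∀ j k, j < k → Aq p j k = 0 := by
  intro j
  induction j with
  | zero => intro k hk; match k, hk with | k + 1, _ => rfl
  | succ j ih =>
      intro k hk
      match k, hk with
      | k + 1, hk =>
        have h1 : Aq p j (k+1) = 0 := ih _ (by omega)
        have h2 : Aq p j k = 0 := ih _ (by omega)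
        show _ = 0
        rw [show Aq p (j+1) (k+1) = ((p : ℝ[X]) + (j : ℝ[X])) * (1 + X ^ 2) * Aq p j (k+1)
          - 2 * ((p : ℝ[X]) - 1 - (j : ℝ[X]) + ((k+1 : ℕ) : ℝ[X])) * X ^ 2 * Aq p j (k+1)
          + X * (1 - X ^ 2) * derivative (Aq p j (k+1)) + X * Aq p j k from rfl, h1, h2]
        simp

def GG (p j : ℕ) : ℝ[X][Y] :=
  ∑ k ∈ Finset.range (j + 1), toY (Aq p j k) * Sq ^ k * Nq p k * Dq ^ (j - k)

lemma derivative_Sq : derivative Sq = -(2 * Y) := by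
  simp [Sq, map_ofNat]
  exact one_add_one_eq_two

lemma derivative_Dq : derivative Dq = 2 * Y - C (2 * X) := by
  simp [Dq, map_ofNat]
  exact one_add_one_eq_two

lemma GG_succ (p j : ℕ) :
    GG p (j + 1) =
      (((p : ℝ[X][Y]) + (j : ℝ[X][Y])) * (1 + Y ^ 2) * Dq
          - 2 * ((p : ℝ[X][Y]) - 1 - (j : ℝ[X][Y])) * Y ^ 2 * Dq
          - ((p : ℝ[X][Y]) + (j : ℝ[X][Y])) * Y * Sq * derivative Dq) * GG p j
        + Y * Sq * Dq * derivative (GG p j) := by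
  set main : ℕ → ℝ[X][Y] := fun k =>
    ((((p : ℝ[X][Y]) + (j : ℝ[X][Y])) * (1 + Y ^ 2)
        - 2 * ((p : ℝ[X][Y]) - 1 - (j : ℝ[X][Y]) + (k : ℝ[X][Y])) * Y ^ 2) * toY (Aq p j k)
      + Y * (1 - Y ^ 2) * toY (derivative (Aq p j k))) * Sq ^ k * Nq p k * Dq ^ (j + 1 - k)
    with hmain
  set prev : ℕ → ℝ[X][Y] := fun k =>
    Y * toY (match k with | 0 => 0 | k' + 1 => Aq p j k') * Sq ^ k * Nq p k * Dq ^ (j + 1 - k)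
    with hprev
  have hexpand : ∀ k, toY (Aq p (j+1) k) * Sq ^ k * Nq p k * Dq ^ (j + 1 - k)
      = main k + prev k := by
    intro k
    rw [hmain, hprev]
    have : Aq p (j+1) k =
      ((p : ℝ[X]) + (j : ℝ[X])) * (1 + X ^ 2) * Aq p j k
        - 2 * ((p : ℝ[X]) - 1 - (j : ℝ[X]) + (k : ℝ[X])) * X ^ 2 * Aq p j k
        + X * (1 - X ^ 2) * derivative (Aq p j k)
        + X * (match k with | 0 => 0 | k' + 1 => Aq p j k') := rfl
    rw [this]
    simp only [toY, Polynomial.map_add, Polynomial.map_sub, Polynomial.map_mul,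
      Polynomial.map_one, Polynomial.map_pow, Polynomial.map_X, Polynomial.map_natCast,
      Polynomial.map_ofNat]
    ring
  have hL : GG p (j+1) = (∑ k ∈ Finset.range (j+1), main k)
      + ((∑ k ∈ Finset.range (j+1), prev (k+1)) + prev 0) := by
    rw [GG]
    rw [Finset.sum_congr rfl (fun k _ => hexpand k), Finset.sum_add_distrib,
      Finset.sum_range_succ (f := main), Finset.sum_range_succ' (f := prev)]
    have hz : main (j+1) = 0 := by
      simp [hmain, toY, Aq_zero p j (j+1) (by omega)]
    rw [hz, add_zero]
  rw [hL]
  have hprev0 : prev 0 = 0 := by rw [hprev]; simp [toY]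
  rw [hprev0, add_zero]
  -- expand RHS
  rw [GG, derivative_sum, Finset.mul_sum, Finset.mul_sum, ← Finset.sum_add_distrib,
    ← Finset.sum_add_distrib]
  apply Finset.sum_congr rfl
  intro k hk
  have hk' : k ≤ j := by simpa using Nat.lt_succ_iff.mp (Finset.mem_range.mp hk)
  obtain ⟨m, rfl⟩ : ∃ m, j = k + m := ⟨j - k, by omega⟩
  rw [hmain, hprev]
  simp only [Nat.add_sub_cancel_left, show k + m + 1 - k = m + 1 from by omega,
    show k + 1 + m + 1 - (k + 1) = m + 1 from by omega,
    show k + m + 1 - (k + 1) = m from by omega]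
  rw [show Nq p (k+1) = derivative (Nq p k) * Dq
      - ((p : ℝ[X][Y]) + (k : ℝ[X][Y])) * Nq p k * derivative Dq from rfl]
  simp only [derivative_mul, derivative_pow, toY_deriv, derivative_Sq, derivative_Dq,
    map_natCast, Polynomial.map_ofNat]
  cases k <;> cases m <;>
    (simp only [Sq, Dq, Nat.add_sub_cancel, Nat.zero_sub, Nat.sub_self, pow_zero]
     push_cast
     ring)

theorem GG_eq (p : ℕ) : ∀ j, GG p j =
    ((∏ i ∈ Finset.range j, (p + i) : ℕ) : ℝ[X][Y]) * Sq ^ (2 * j + 1) := by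
  intro j
  induction j with
  | zero =>
      rw [GG]
      simp [Aq, toY, Nq]
  | succ j ih =>
      rw [GG_succ, ih]
      rw [Finset.prod_range_succ]
      have hder : derivative (((∏ i ∈ Finset.range j, (p + i) : ℕ) : ℝ[X][Y]) * Sq ^ (2 * j + 1))
          = ((∏ i ∈ Finset.range j, (p + i) : ℕ) : ℝ[X][Y]) *
            (((2 * j + 1 : ℕ) : ℝ[X][Y]) * Sq ^ (2 * j) * derivative Sq) := by
        rw [derivative_mul, derivative_natCast, zero_mul, zero_add, derivative_pow]
        simp only [Nat.add_sub_cancel, map_natCast]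
      rw [hder, derivative_Sq, derivative_Dq]
      rw [show 2 * (j + 1) + 1 = (2 * j) + 3 from by ring, pow_add,
        show 2 * j + 1 = (2 * j) + 1 from rfl, pow_add, pow_one]
      generalize Sq ^ (2 * j) = w
      simp only [Sq, Dq]
      push_cast
      ring


lemma evalEval_Sq (t r : ℝ) : Sq.evalEval t r = 1 - r ^ 2 := by
  show eval t (eval (C r) Sq) = _
  simp [Sq]

lemma evalEval_Dq (t r : ℝ) : Dq.evalEval t r = 1 + r ^ 2 - 2 * r * t := by
  show eval t (eval (C r) Dq) = _
  simp [Dq]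
  ring

lemma evalEval_dDq (t r : ℝ) : (derivative Dq).evalEval t r = 2 * r - 2 * t := by
  rw [derivative_Dq]
  show eval t (eval (C r) _) = _
  simp

lemma continuous_evalEval (q : ℝ[X][Y]) (t : ℝ) : Continuous fun x => q.evalEval t x := by
  simp only [evalEval_map_eval]
  exact (q.map (evalRingHom t)).continuous

lemma iter_deriv_Pe (p : ℕ) (hp : 1 ≤ p) (t : ℝ) (k : ℕ) :
    ∀ r : ℝ, Dq.evalEval t r ≠ 0 →
      iteratedDeriv k (fun ρ => Pe p ρ t) r
        = (Nq p k).evalEval t r / (Dq.evalEval t r) ^ (p + k) := by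
  induction k with
  | zero =>
      intro r hr
      rw [iteratedDeriv_zero]
      simp only [Pe, Nq, evalEval_Sq, evalEval_Dq, Nat.add_zero]
  | succ k ih =>
      intro r hr
      rw [iteratedDeriv_succ]
      have hU : IsOpen {x : ℝ | Dq.evalEval t x ≠ 0} :=
        isOpen_compl_singleton.preimage (continuous_evalEval Dq t)
      have hev : (iteratedDeriv k fun ρ => Pe p ρ t)
          =ᶠ[nhds r] fun x => (Nq p k).evalEval t x / (Dq.evalEval t x) ^ (p + k) :=
        Filter.eventuallyEq_of_mem (hU.mem_nhds hr) (fun x hx => ih x hx)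
      rw [hev.deriv_eq]
      have h1 := hasDerivAt_evalEval (Nq p k) t r
      have h2 := (hasDerivAt_evalEval Dq t r).pow (p + k)
      have h3 := h1.div h2 (pow_ne_zero _ hr)
      have h3' : HasDerivAt (fun x => (Nq p k).evalEval t x / (Dq.evalEval t x) ^ (p + k))
        (((derivative (Nq p k)).evalEval t r * (Dq.evalEval t r) ^ (p + k)
          - (Nq p k).evalEval t r * (((p + k : ℕ) : ℝ) * (Dq.evalEval t r) ^ (p + k - 1)
            * (derivative Dq).evalEval t r)) / ((Dq.evalEval t r) ^ (p + k)) ^ 2) r := h3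
      rw [h3'.deriv]
      rw [show Nq p (k + 1) = derivative (Nq p k) * Dq
        - ((p : ℝ[X][Y]) + (k : ℝ[X][Y])) * Nq p k * derivative Dq from rfl]
      simp only [evalEval_mul, evalEval_sub, evalEval_add, evalEval_natCast]
      obtain ⟨m, hm⟩ : ∃ m, p + k = m + 1 := ⟨p + k - 1, by omega⟩
      rw [hm, show p + (k + 1) = m + 2 from by omega, show ((p : ℝ) + (k : ℝ)) = (m : ℝ) + 1 from by exact_mod_cast congrArg (Nat.cast (R := ℝ)) hm]
      simp only [Nat.add_sub_cancel]
      push_cast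
      field_simp
      ring

/-- In even dimension n = 2p, there are polynomials P_0, …, P_{p-1} such that
P_h(rζ,ξ) = Σ_k P_k(r)(1-r²)^k ∂^k/∂r^k P_e(rζ,ξ). -/
theorem stmt7 (p : ℕ) (hp : 2 ≤ p) :
    ∃ P : Fin p → Polynomial ℝ,
      ∀ r : ℝ, 0 ≤ r → r < 1 →
        ∀ ζ ξ : EuclideanSpace ℝ (Fin (2 * p)), ‖ζ‖ = 1 → ‖ξ‖ = 1 →
          Ph (2 * p) r (inner ℝ ζ ξ) =
            ∑ k : Fin p, (P k).eval r * (1 - r ^ 2) ^ (k : ℕ) *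
              iteratedDeriv (k : ℕ) (fun ρ => Pe p ρ (inner ℝ ζ ξ)) r := by
  set K : ℝ := ((∏ i ∈ Finset.range (p - 1), (p + i) : ℕ) : ℝ) with hK
  have hKpos : 0 < K := by
    rw [hK]
    have : 0 < (∏ i ∈ Finset.range (p - 1), (p + i) : ℕ) :=
      Finset.prod_pos fun i _ => by omega
    exact_mod_cast this
  have hKne : K ≠ 0 := ne_of_gt hKpos
  refine ⟨fun k => Polynomial.C K⁻¹ * Aq p (p - 1) (k : ℕ), ?_⟩
  intro r hr0 hr1 ζ ξ hζ hξ
  set t : ℝ := inner ℝ ζ ξ with htdef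
  have ht1 : t ≤ 1 := by
    have := abs_real_inner_le_norm ζ ξ
    rw [hζ, hξ] at this
    have := (abs_le.mp (by simpa using this)).2
    simpa [htdef] using this
  have hD : 0 < 1 + r ^ 2 - 2 * r * t := by
    nlinarith [sq_nonneg (1 - r), mul_nonneg hr0 (sub_nonneg.mpr ht1)]
  have hDne : (1 + r ^ 2 - 2 * r * t) ≠ 0 := ne_of_gt hD
  have hDev : Dq.evalEval t r = 1 + r ^ 2 - 2 * r * t := evalEval_Dq t r
  have hDevne : Dq.evalEval t r ≠ 0 := by rw [hDev]; exact hDne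
  -- the evaluated main identity
  have hmain := congrArg (fun q : ℝ[X][Y] => q.evalEval t r) (GG_eq p (p - 1))
  simp only [GG, evalEval_finset_sum, evalEval_mul, evalEval_pow, evalEval_natCast,
    evalEval_toY, evalEval_Sq, evalEval_Dq] at hmain
  rw [show p - 1 + 1 = p from by omega, ← hK] at hmain
  -- rewrite the goal sum
  rw [Fin.sum_univ_eq_sum_range (fun k => (Polynomial.C K⁻¹ * Aq p (p - 1) k).eval r
    * (1 - r ^ 2) ^ k * iteratedDeriv k (fun ρ => Pe p ρ t) r) p]
  have hsum : ∀ k ∈ Finset.range p,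
      (Polynomial.C K⁻¹ * Aq p (p - 1) k).eval r * (1 - r ^ 2) ^ k
        * iteratedDeriv k (fun ρ => Pe p ρ t) r
      = ((Aq p (p - 1) k).eval r * (1 - r ^ 2) ^ k * (Nq p k).evalEval t r
          * (1 + r ^ 2 - 2 * r * t) ^ (p - 1 - k))
        * (K⁻¹ / (1 + r ^ 2 - 2 * r * t) ^ (2 * p - 1)) := by
    intro k hk
    have hkp : k ≤ p - 1 := by
      have := Finset.mem_range.mp hk; omega
    rw [iter_deriv_Pe p (by omega) t k r hDevne, hDev]
    have hpow : (1 + r ^ 2 - 2 * r * t) ^ (p - 1 - k) * (1 + r ^ 2 - 2 * r * t) ^ (p + k)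
        = (1 + r ^ 2 - 2 * r * t) ^ (2 * p - 1) := by
      rw [← pow_add]; congr 1; omega
    have hpk : (1 + r ^ 2 - 2 * r * t) ^ (p + k) ≠ 0 := pow_ne_zero _ hDne
    have h2p : (1 + r ^ 2 - 2 * r * t) ^ (2 * p - 1) ≠ 0 := pow_ne_zero _ hDne
    rw [eval_mul, eval_C]
    have e1 : K⁻¹ * (Aq p (p - 1) k).eval r * (1 - r ^ 2) ^ k
        * ((Nq p k).evalEval t r / (1 + r ^ 2 - 2 * r * t) ^ (p + k))
        = (K⁻¹ * ((Aq p (p - 1) k).eval r * (1 - r ^ 2) ^ k * (Nq p k).evalEval t r))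
          / (1 + r ^ 2 - 2 * r * t) ^ (p + k) := by ring
    have e2 : (Aq p (p - 1) k).eval r * (1 - r ^ 2) ^ k * (Nq p k).evalEval t r
          * (1 + r ^ 2 - 2 * r * t) ^ (p - 1 - k)
        * (K⁻¹ / (1 + r ^ 2 - 2 * r * t) ^ (2 * p - 1))
        = (K⁻¹ * ((Aq p (p - 1) k).eval r * (1 - r ^ 2) ^ k * (Nq p k).evalEval t r
            * (1 + r ^ 2 - 2 * r * t) ^ (p - 1 - k)))
          / (1 + r ^ 2 - 2 * r * t) ^ (2 * p - 1) := by ring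
    rw [e1, e2, div_eq_div_iff hpk h2p]
    linear_combination (-(K⁻¹ * ((Aq p (p - 1) k).eval r * (1 - r ^ 2) ^ k
      * (Nq p k).evalEval t r))) * hpow
  rw [Finset.sum_congr rfl hsum, ← Finset.sum_mul, hmain]
  rw [Ph]
  rw [div_pow]
  rw [show 2 * (p - 1) + 1 = 2 * p - 1 from by omega]
  rw [show 2 * p - 1 = 2 * p - 1 from rfl]
  field_simp
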